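/- Let A satisfy the RIP of order K with constant δ ∈ [0,1): (1-δ)‖v‖₂² ≤ ‖Av‖₂² ≤ (1+δ)‖v‖₂² for all K-sparse v. Let x ∈ ℂⁿ, let x_K be its best K-term approximation (keeping the K largest-magnitude entries) and x_{K^c} = x - x_K its tail. Then ‖Ax‖₂ ≥ √(1-δ)·(‖x_K‖₂ - κ·(‖x_{K^c}‖₂ + ‖x_{K^c}‖₁/√K)), where κ = √(1+δ)/√(1-δ). In particular, if ‖x_{K^c}‖₂/‖x_K‖₂ + ‖x_{K^c}‖₁/(√K‖x_K‖₂) < 1/κ and x_K ≠ 0, then ‖Ax‖₂ > 0. -/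

import Mathlib

open scoped BigOperators

/-- The Euclidean (ℓ₂) norm of a finitely indexed complex vector. -/
noncomputable def l2 {ι : Type*} [Fintype ι] (v : ι → ℂ) : ℝ :=
  Real.sqrt (∑ i, ‖v i‖ ^ 2)

/-- The ℓ₁ norm of a finitely indexed complex vector. -/
noncomputable def l1 {ι : Type*} [Fintype ι] (v : ι → ℂ) : ℝ :=
  ∑ i, ‖v i‖

/-- A vector is `K`-sparse if it has at most `K` nonzero entries. -/
def Sparse {n : ℕ} (K : ℕ) (x : Fin n → ℂ) : Prop :=
  ∃ s : Finset (Fin n), s.card ≤ K ∧ ∀ i ∉ s, x i = 0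

/-- `xK` is a best `K`-term approximation of `x`: it is `K`-sparse, agrees with `x`
on its support, and keeps the largest-magnitude entries. -/
def IsBestKApprox {n : ℕ} (K : ℕ) (x xK : Fin n → ℂ) : Prop :=
  Sparse K xK ∧ (∀ i, xK i ≠ 0 → xK i = x i) ∧
    (∀ i j, xK i ≠ 0 → xK j = 0 → ‖x j‖ ≤ ‖x i‖)

lemma l2_nonneg {ι : Type*} [Fintype ι] (v : ι → ℂ) : 0 ≤ l2 v := Real.sqrt_nonneg _

lemma l1_nonneg {ι : Type*} [Fintype ι] (v : ι → ℂ) : 0 ≤ l1 v :=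
  Finset.sum_nonneg fun _ _ => norm_nonneg _

lemma l2_eq_norm {ι : Type*} [Fintype ι] (v : ι → ℂ) :
    l2 v = ‖(WithLp.equiv 2 (ι → ℂ)).symm v‖ := by
  rw [EuclideanSpace.norm_eq]; rfl

lemma l2_sq {ι : Type*} [Fintype ι] (v : ι → ℂ) : l2 v ^ 2 = ∑ i, ‖v i‖ ^ 2 :=
  Real.sq_sqrt (Finset.sum_nonneg fun _ _ => sq_nonneg _)

lemma l2_sum_le {ι κ : Type*} [Fintype ι] (s : Finset κ) (f : κ → ι → ℂ) :
    l2 (∑ j ∈ s, f j) ≤ ∑ j ∈ s, l2 (f j) := by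
  simp only [l2_eq_norm]
  rw [show (WithLp.equiv 2 (ι → ℂ)).symm (∑ j ∈ s, f j)
      = ∑ j ∈ s, (WithLp.equiv 2 (ι → ℂ)).symm (f j) from
    map_sum (WithLp.linearEquiv 2 ℂ (ι → ℂ)).symm f s]
  exact norm_sum_le _ _

lemma l2_sub_le {ι : Type*} [Fintype ι] (u v : ι → ℂ) :
    l2 (u - v) ≤ l2 u + l2 v := by
  simp only [l2_eq_norm]
  rw [show (WithLp.equiv 2 (ι → ℂ)).symm (u - v)
      = (WithLp.equiv 2 (ι → ℂ)).symm u - (WithLp.equiv 2 (ι → ℂ)).symm v from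
    map_sub (WithLp.linearEquiv 2 ℂ (ι → ℂ)).symm u v]
  exact norm_sub_le _ _

lemma le_sqrt_mul {a b c : ℝ} (ha : 0 ≤ a) (hb : 0 ≤ b) (h : a ^ 2 ≤ c * b ^ 2) :
    a ≤ Real.sqrt c * b := by
  have h1 : a = Real.sqrt (a ^ 2) := (Real.sqrt_sq ha).symm
  rw [h1]
  calc Real.sqrt (a ^ 2) ≤ Real.sqrt (c * b ^ 2) := Real.sqrt_le_sqrt h
    _ = Real.sqrt c * Real.sqrt (b ^ 2) := Real.sqrt_mul' _ (sq_nonneg b)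
    _ = Real.sqrt c * b := by rw [Real.sqrt_sq hb]

lemma sqrt_mul_le {a b c : ℝ} (hb : 0 ≤ b) (hc : 0 ≤ c) (h : c * b ^ 2 ≤ a ^ 2) (ha : 0 ≤ a) :
    Real.sqrt c * b ≤ a := by
  have : Real.sqrt c * b = Real.sqrt (c * b ^ 2) := by
    rw [Real.sqrt_mul hc, Real.sqrt_sq hb]
  rw [this, ← Real.sqrt_sq ha]
  exact Real.sqrt_le_sqrt h

lemma tail_bound {m n K : ℕ} (hK : 0 < K) (A : Matrix (Fin m) (Fin n) ℂ)
    (c : ℝ) (hc : 0 ≤ c)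
    (hRIP : ∀ v : Fin n → ℂ, Sparse K v → l2 (A.mulVec v) ^ 2 ≤ c * l2 v ^ 2)
    (t : Fin n → ℂ) :
    l2 (A.mulVec t) ≤ Real.sqrt c * (l2 t + l1 t / Real.sqrt K) := by
  have hKR : (0:ℝ) < Real.sqrt K := Real.sqrt_pos.2 (by exact_mod_cast hK)
  rcases Nat.eq_zero_or_pos n with hn | hn
  · -- trivial: t is K-sparse (support empty)
    have hsp : Sparse K t := ⟨∅, by simp [Nat.le_of_lt hK], fun i _ => by subst hn; exact i.elim0⟩
    have h1 := le_sqrt_mul (l2_nonneg _) (l2_nonneg t) (hRIP t hsp)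
    have h2 : 0 ≤ l1 t / Real.sqrt K := div_nonneg (l1_nonneg t) hKR.le
    nlinarith [Real.sqrt_nonneg c, l2_nonneg t]
  obtain ⟨n', rfl⟩ : ∃ n', n = n' + 1 := ⟨n - 1, (Nat.succ_pred_eq_of_pos hn).symm⟩
  set σ := Tuple.sort (fun i : Fin (n' + 1) => -‖t i‖) with hσ
  have hanti : ∀ p q : Fin (n' + 1), p ≤ q → ‖t (σ q)‖ ≤ ‖t (σ p)‖ := by
    intro p q hpq
    have := Tuple.monotone_sort (fun i : Fin (n' + 1) => -‖t i‖) hpq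
    simpa [hσ] using this
  set s : ℕ → Fin (n' + 1) → ℂ := fun j i => if (σ.symm i : ℕ) / K = j then t i else 0 with hs
  have hsupp : ∀ j i, s j i ≠ 0 → (σ.symm i : ℕ) / K = j := by
    intro j i h
    by_contra hcon
    simp [hs, hcon] at h
  have hdecomp : t = ∑ j ∈ Finset.range (n' + 1), s j := by
    funext i
    have hlt : (σ.symm i : ℕ) / K < n' + 1 :=
      lt_of_le_of_lt (Nat.div_le_self _ _) (σ.symm i).2
    simp only [Finset.sum_apply, hs]
    rw [Finset.sum_ite_eq (Finset.range (n' + 1)) ((σ.symm i : ℕ) / K) (fun _ => t i)]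
    simp [hlt]
  have hfcard : ∀ j : ℕ,
      (Finset.univ.filter (fun i : Fin (n' + 1) => (σ.symm i : ℕ) / K = j)).card ≤ K := by
    intro j
    have := Finset.card_le_card_of_injOn
      (f := fun i : Fin (n' + 1) => (⟨(σ.symm i : ℕ) % K, Nat.mod_lt _ hK⟩ : Fin K))
      (s := Finset.univ.filter (fun i : Fin (n' + 1) => (σ.symm i : ℕ) / K = j))
      (t := (Finset.univ : Finset (Fin K)))
      (fun _ _ => Finset.mem_univ _) ?_
    · simpa using this
    · intro i₁ h₁ i₂ h₂ hmod
      simp only [Finset.coe_filter, Set.mem_setOf_eq, Finset.mem_univ, true_and] at h₁ h₂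
      have hm : ((σ.symm i₁ : ℕ) % K) = ((σ.symm i₂ : ℕ) % K) := congrArg Fin.val hmod
      have m1 := Nat.div_add_mod (σ.symm i₁ : ℕ) K
      have m2 := Nat.div_add_mod (σ.symm i₂ : ℕ) K
      have e1 : (σ.symm i₁ : ℕ) = (σ.symm i₂ : ℕ) := by
        rw [← m1, ← m2, h₁, h₂, hm]
      exact σ.symm.injective (Fin.ext e1)
  have hsparse : ∀ j : ℕ, Sparse K (s j) := by
    intro j
    refine ⟨Finset.univ.filter (fun i => (σ.symm i : ℕ) / K = j), hfcard j, ?_⟩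
    intro i hi
    simp only [Finset.mem_filter, Finset.mem_univ, true_and] at hi
    simp [hs, hi]
  have h0 : l2 (s 0) ≤ l2 t := by
    apply Real.sqrt_le_sqrt
    apply Finset.sum_le_sum
    intro i _
    by_cases h : (σ.symm i : ℕ) / K = 0 <;> simp [hs, h] <;> positivity
  have hchain : ∀ j : ℕ, l2 (s (j + 1)) ≤ l1 (s j) / Real.sqrt K := by
    intro j
    by_cases hz : ∀ i, s (j + 1) i = 0
    · have hz2 : l2 (s (j + 1)) = 0 := by simp [l2, hz]
      rw [hz2]
      exact div_nonneg (l1_nonneg _) hKR.le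
    push_neg at hz
    obtain ⟨i0, hi0⟩ := hz
    have hd0 : (σ.symm i0 : ℕ) / K = j + 1 := hsupp _ _ hi0
    have hge0 : (j + 1) * K ≤ (σ.symm i0 : ℕ) := by
      calc (j + 1) * K = (σ.symm i0 : ℕ) / K * K := by rw [hd0]
        _ ≤ _ := Nat.div_mul_le_self _ _
    -- key pointwise bound
    have hpoint : ∀ i, s (j + 1) i ≠ 0 → (K : ℝ) * ‖t i‖ ≤ l1 (s j) := by
      intro i hi
      have hdi : (σ.symm i : ℕ) / K = j + 1 := hsupp _ _ hi
      have hgei : (j + 1) * K ≤ (σ.symm i : ℕ) := by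
        calc (j + 1) * K = (σ.symm i : ℕ) / K * K := by rw [hdi]
          _ ≤ _ := Nat.div_mul_le_self _ _
      have hl1 : l1 (s j) = ∑ p : Fin (n' + 1), ‖s j (σ p)‖ :=
        (Equiv.sum_comp σ fun i => ‖s j i‖).symm
      set P : Finset (Fin (n' + 1)) :=
        Finset.univ.filter (fun p : Fin (n' + 1) => (p : ℕ) / K = j) with hP
      have hPcard : K ≤ P.card := by
        have := Finset.card_le_card_of_injOn
          (f := fun q : ℕ => (⟨(j * K + q) % (n' + 1), Nat.mod_lt _ (Nat.succ_pos n')⟩ :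
            Fin (n' + 1)))
          (s := Finset.range K) (t := P) ?_ ?_
        · simpa using this
        · intro q hq
          simp only [Finset.mem_coe, Finset.mem_range] at hq
          have hlt : j * K + q < n' + 1 := by
            have h1 : j * K + q < (j + 1) * K := by nlinarith
            omega
          have hmodeq : (j * K + q) % (n' + 1) = j * K + q := Nat.mod_eq_of_lt hlt
          simp only [hP, Finset.mem_coe, Finset.mem_filter, Finset.mem_univ, true_and]
          show ((j * K + q) % (n' + 1)) / K = j
          rw [hmodeq]
          exact Nat.div_eq_of_lt_le (by nlinarith) (by nlinarith)
        · intro q₁ h₁ q₂ h₂ heq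
          simp only [Finset.coe_range, Set.mem_Iio] at h₁ h₂
          have hv := congrArg Fin.val heq
          simp only at hv
          have hlt1 : j * K + q₁ < n' + 1 := by
            have : j * K + q₁ < (j + 1) * K := by nlinarith
            omega
          have hlt2 : j * K + q₂ < n' + 1 := by
            have : j * K + q₂ < (j + 1) * K := by nlinarith
            omega
          rw [Nat.mod_eq_of_lt hlt1, Nat.mod_eq_of_lt hlt2] at hv
          omega
      have hterm : ∀ p ∈ P, ‖t i‖ ≤ ‖s j (σ p)‖ := by
        intro p hp
        simp only [hP, Finset.mem_filter, Finset.mem_univ, true_and] at hp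
        have hple : (p : ℕ) < (j + 1) * K := by
          have := (Nat.div_lt_iff_lt_mul hK).1 (by omega : (p : ℕ) / K < j + 1)
          omega
        have hple2 : p ≤ σ.symm i := by
          rw [Fin.le_def]
          omega
        have h1 : ‖t (σ (σ.symm i))‖ ≤ ‖t (σ p)‖ := hanti _ _ hple2
        rw [Equiv.apply_symm_apply] at h1
        have h2 : s j (σ p) = t (σ p) := by
          simp [hs, Equiv.symm_apply_apply, hp]
        rw [h2]
        exact h1
      calc (K : ℝ) * ‖t i‖ ≤ (P.card : ℝ) * ‖t i‖ := by
            have : (K : ℝ) ≤ (P.card : ℝ) := by exact_mod_cast hPcard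
            exact mul_le_mul_of_nonneg_right this (norm_nonneg _)
        _ ≤ ∑ p ∈ P, ‖s j (σ p)‖ := by
            have := Finset.card_nsmul_le_sum P (fun p => ‖s j (σ p)‖) (‖t i‖) hterm
            simpa [nsmul_eq_mul] using this
        _ ≤ ∑ p : Fin (n' + 1), ‖s j (σ p)‖ :=
            Finset.sum_le_sum_of_subset_of_nonneg (Finset.subset_univ _)
              (fun _ _ _ => norm_nonneg _)
        _ = l1 (s j) := hl1.symm
    -- sum of squares bound
    set F : Finset (Fin (n' + 1)) :=
      Finset.univ.filter (fun i : Fin (n' + 1) => (σ.symm i : ℕ) / K = j + 1) with hF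
    have hsum_eq : ∑ i, ‖s (j + 1) i‖ ^ 2 = ∑ i ∈ F, ‖s (j + 1) i‖ ^ 2 := by
      rw [hF]
      refine (Finset.sum_filter_of_ne ?_).symm
      intro i _ hne
      apply hsupp
      intro h0'
      rw [h0'] at hne
      simp at hne
    have hbound : ∀ i ∈ F, ‖s (j + 1) i‖ ^ 2 ≤ (l1 (s j) / K) ^ 2 := by
      intro i _
      by_cases hzi : s (j + 1) i = 0
      · simp only [hzi, norm_zero]
        norm_num
        positivity
      · have h1 := hpoint i hzi
        have h2 : ‖t i‖ ≤ l1 (s j) / K := by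
          rw [le_div_iff₀ (by exact_mod_cast hK : (0:ℝ) < K)]
          linarith [h1]
        have h3 : s (j + 1) i = t i := by
          have := hsupp _ _ hzi
          simp [hs, this]
        rw [h3]
        have h4 : (0:ℝ) ≤ l1 (s j) / K :=
          div_nonneg (l1_nonneg _) (by positivity)
        nlinarith [norm_nonneg (t i)]
    have hsq : l2 (s (j + 1)) ^ 2 ≤ (K : ℝ) * (l1 (s j) / K) ^ 2 := by
      rw [l2_sq, hsum_eq]
      calc ∑ i ∈ F, ‖s (j + 1) i‖ ^ 2 ≤ ∑ _i ∈ F, (l1 (s j) / K) ^ 2 :=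
            Finset.sum_le_sum hbound
        _ = (F.card : ℝ) * (l1 (s j) / K) ^ 2 := by
            rw [Finset.sum_const, nsmul_eq_mul]
        _ ≤ (K : ℝ) * (l1 (s j) / K) ^ 2 := by
            have : (F.card : ℝ) ≤ (K : ℝ) := by exact_mod_cast hfcard (j + 1)
            exact mul_le_mul_of_nonneg_right this (by positivity)
    have hfin := le_sqrt_mul (l2_nonneg _)
      (div_nonneg (l1_nonneg (s j)) (by positivity : (0:ℝ) ≤ (K:ℝ))) hsq
    calc l2 (s (j + 1)) ≤ Real.sqrt K * (l1 (s j) / K) := hfin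
      _ = l1 (s j) / Real.sqrt K := by
          have hKK : Real.sqrt K * Real.sqrt K = (K : ℝ) :=
            Real.mul_self_sqrt (by positivity)
          field_simp
          linear_combination l1 (s j) * hKK
  have hl1sum : ∑ j ∈ Finset.range (n' + 1), l1 (s j) = l1 t := by
    simp only [l1]
    rw [Finset.sum_comm]
    apply Finset.sum_congr rfl
    intro i _
    have hlt : (σ.symm i : ℕ) / K < n' + 1 :=
      lt_of_le_of_lt (Nat.div_le_self _ _) (σ.symm i).2
    have : ∀ j, ‖s j i‖ = if (σ.symm i : ℕ) / K = j then ‖t i‖ else 0 := by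
      intro j
      by_cases h : (σ.symm i : ℕ) / K = j <;> simp [hs, h]
    simp only [this]
    rw [Finset.sum_ite_eq (Finset.range (n' + 1)) ((σ.symm i : ℕ) / K) (fun _ => ‖t i‖)]
    simp [hlt]
  -- assembly
  have step1 : l2 (A.mulVec t) ≤ ∑ j ∈ Finset.range (n' + 1), l2 (A.mulVec (s j)) := by
    have hmv : A.mulVec t = ∑ j ∈ Finset.range (n' + 1), A.mulVec (s j) := by
      rw [hdecomp]
      exact map_sum A.mulVecLin s (Finset.range (n' + 1))
    rw [hmv]
    exact l2_sum_le _ _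
  have step2 : ∀ j, l2 (A.mulVec (s j)) ≤ Real.sqrt c * l2 (s j) := fun j =>
    le_sqrt_mul (l2_nonneg _) (l2_nonneg _) (hRIP _ (hsparse j))
  have step3 : ∑ j ∈ Finset.range (n' + 1), l2 (s j) ≤ l2 t + l1 t / Real.sqrt K := by
    rw [Finset.sum_range_succ']
    have hA : ∑ j ∈ Finset.range n', l2 (s (j + 1)) ≤ l1 t / Real.sqrt K := by
      calc ∑ j ∈ Finset.range n', l2 (s (j + 1))
          ≤ ∑ j ∈ Finset.range n', l1 (s j) / Real.sqrt K :=
            Finset.sum_le_sum fun j _ => hchain j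
        _ = (∑ j ∈ Finset.range n', l1 (s j)) / Real.sqrt K := by
            rw [Finset.sum_div]
        _ ≤ (∑ j ∈ Finset.range (n' + 1), l1 (s j)) / Real.sqrt K := by
            have hnum : (∑ j ∈ Finset.range n', l1 (s j))
                ≤ ∑ j ∈ Finset.range (n' + 1), l1 (s j) := by
              apply Finset.sum_le_sum_of_subset_of_nonneg
                (Finset.range_subset_range.2 (Nat.le_succ n'))
              intro j _ _
              exact l1_nonneg (s j)
            gcongr
        _ = l1 t / Real.sqrt K := by rw [hl1sum]
    linarith [h0, hA]
  calc l2 (A.mulVec t) ≤ ∑ j ∈ Finset.range (n' + 1), l2 (A.mulVec (s j)) := step1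
    _ ≤ ∑ j ∈ Finset.range (n' + 1), Real.sqrt c * l2 (s j) :=
        Finset.sum_le_sum fun j _ => step2 j
    _ = Real.sqrt c * ∑ j ∈ Finset.range (n' + 1), l2 (s j) := by
        rw [Finset.mul_sum]
    _ ≤ Real.sqrt c * (l2 t + l1 t / Real.sqrt K) :=
        mul_le_mul_of_nonneg_left step3 (Real.sqrt_nonneg c)

/-- lower bound on the image of a general signal, in terms of head and tail. -/
theorem lower_bound_image_general_signal {m n K : ℕ} (hK : 0 < K)
    (A : Matrix (Fin m) (Fin n) ℂ) (δ : ℝ) (hδ0 : 0 ≤ δ) (hδ1 : δ < 1)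
    (hRIP : ∀ v : Fin n → ℂ, Sparse K v →
      (1 - δ) * l2 v ^ 2 ≤ l2 (A.mulVec v) ^ 2 ∧ l2 (A.mulVec v) ^ 2 ≤ (1 + δ) * l2 v ^ 2)
    (x xK : Fin n → ℂ) (hbest : IsBestKApprox K x xK) :
    Real.sqrt (1 - δ) * (l2 xK - (Real.sqrt (1 + δ) / Real.sqrt (1 - δ)) *
        (l2 (x - xK) + l1 (x - xK) / Real.sqrt K)) ≤ l2 (A.mulVec x) ∧
    (l2 (x - xK) / l2 xK + l1 (x - xK) / (Real.sqrt K * l2 xK)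
        < 1 / (Real.sqrt (1 + δ) / Real.sqrt (1 - δ)) → xK ≠ 0 →
      0 < l2 (A.mulVec x)) := by
  obtain ⟨hsp, -, -⟩ := hbest
  have h1δ : (0:ℝ) < 1 - δ := by linarith
  have h2δ : (0:ℝ) < 1 + δ := by linarith
  have hs1 : 0 < Real.sqrt (1 - δ) := Real.sqrt_pos.2 h1δ
  have hs2 : 0 < Real.sqrt (1 + δ) := Real.sqrt_pos.2 h2δ
  have hKR : (0:ℝ) < Real.sqrt K := Real.sqrt_pos.2 (by exact_mod_cast hK)
  set t : Fin n → ℂ := x - xK with ht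
  set E : ℝ := l2 t + l1 t / Real.sqrt K with hE
  have hE0 : 0 ≤ E := by
    rw [hE]
    have h1 := l2_nonneg t
    have h2 := div_nonneg (l1_nonneg t) hKR.le
    linarith
  -- tail bound
  have htail : l2 (A.mulVec t) ≤ Real.sqrt (1 + δ) * E :=
    tail_bound hK A (1 + δ) h2δ.le (fun v hv => (hRIP v hv).2) t
  -- head bound
  have hhead : Real.sqrt (1 - δ) * l2 xK ≤ l2 (A.mulVec xK) :=
    sqrt_mul_le (l2_nonneg xK) h1δ.le (hRIP xK hsp).1 (l2_nonneg _)
  -- reverse triangle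
  have hrev : l2 (A.mulVec xK) ≤ l2 (A.mulVec x) + l2 (A.mulVec t) := by
    have hxk : A.mulVec xK = A.mulVec x - A.mulVec t := by
      have : xK = x - t := by rw [ht]; ring_nf
      rw [this]
      exact map_sub A.mulVecLin x t
    rw [hxk]
    exact l2_sub_le _ _
  have hmain : Real.sqrt (1 - δ) * l2 xK - Real.sqrt (1 + δ) * E ≤ l2 (A.mulVec x) := by
    linarith
  have hkey : Real.sqrt (1 - δ) * (l2 xK - (Real.sqrt (1 + δ) / Real.sqrt (1 - δ)) * E)
      = Real.sqrt (1 - δ) * l2 xK - Real.sqrt (1 + δ) * E := by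
    field_simp
  constructor
  · rw [hkey]; exact hmain
  · intro h hxK0
    have hxKpos : 0 < l2 xK := by
      have hne : ∃ i, xK i ≠ 0 := by
        by_contra hcon
        push_neg at hcon
        exact hxK0 (funext hcon)
      obtain ⟨i0, hi0⟩ := hne
      apply Real.sqrt_pos.2
      apply Finset.sum_pos' (fun i _ => by positivity)
      exact ⟨i0, Finset.mem_univ _, pow_pos (norm_pos_iff.mpr hi0) 2⟩
    set κ : ℝ := Real.sqrt (1 + δ) / Real.sqrt (1 - δ) with hκ
    have hκpos : 0 < κ := div_pos hs2 hs1
    have hEb : E / l2 xK < 1 / κ := by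
      have : l2 t / l2 xK + l1 t / (Real.sqrt K * l2 xK) = E / l2 xK := by
        rw [hE, add_div, ← div_div]
      rw [← this]
      exact h
    have hlt : κ * E < l2 xK := by
      rw [div_lt_div_iff₀ hxKpos hκpos] at hEb
      nlinarith
    have hpos : 0 < Real.sqrt (1 - δ) * (l2 xK - κ * E) := by
      apply mul_pos hs1
      linarith
    calc (0:ℝ) < Real.sqrt (1 - δ) * (l2 xK - κ * E) := hpos
      _ ≤ l2 (A.mulVec x) := by rw [hkey]; exact hmain
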